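/- In QHC, ⊢ (¬¬α ↔ ∇α) ↔ (¬!¬?α → !?α): the problem ∇α coincides with ¬¬α exactly when the proposition ?α is stable (strong internalized form). -/
import Mathlib


/- Problem (intuitionistic) formulas and proposition (classical) formulas of QHC. -/
mutual
inductive PF : Type
  | var : Nat → PF
  | bot : PF
  | and : PF → PF → PF
  | or : PF → PF → PF
  | imp : PF → PF → PF
  | bang : CF → PF
inductive CF : Type
  | var : Nat → CF
  | fls : CF
  | and : CF → CF → CF
  | or : CF → CF → CF
  | imp : CF → CF → CF
  | quest : PF → CF
end

def PF.neg (α : PF) : PF := α.imp PF.bot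
def CF.neg (p : CF) : CF := p.imp CF.fls
def PF.iff (α β : PF) : PF := (α.imp β).and (β.imp α)
def CF.iff (p q : CF) : CF := (p.imp q).and (q.imp p)
def CF.box (p : CF) : CF := CF.quest (PF.bang p)
def PF.nabla (α : PF) : PF := PF.bang (CF.quest α)

/- Derivability in QHC, parameterized by a set `Ax` of extra problem axioms
(used to treat the axiom ¬!0 and its variants uniformly). Intuitionistic logic
on problems, classical logic on propositions, the rules α ⊢ ?α and p ⊢ !p, and
the mixed axioms ?!p → p, α → !?α, !(p→q) → (!p → !q), ?(α→β) → (?α → ?β). -/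
mutual
inductive ProvP (Ax : PF → Prop) : PF → Prop
  | axm {α} : Ax α → ProvP Ax α
  | mp {α β} : ProvP Ax (α.imp β) → ProvP Ax α → ProvP Ax β
  | ak (α β : PF) : ProvP Ax (α.imp (β.imp α))
  | as (α β γ : PF) : ProvP Ax ((α.imp (β.imp γ)).imp ((α.imp β).imp (α.imp γ)))
  | andI (α β : PF) : ProvP Ax (α.imp (β.imp (α.and β)))
  | andE1 (α β : PF) : ProvP Ax ((α.and β).imp α)
  | andE2 (α β : PF) : ProvP Ax ((α.and β).imp β)
  | orI1 (α β : PF) : ProvP Ax (α.imp (α.or β))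
  | orI2 (α β : PF) : ProvP Ax (β.imp (α.or β))
  | orE (α β γ : PF) : ProvP Ax ((α.imp γ).imp ((β.imp γ).imp ((α.or β).imp γ)))
  | exf (α : PF) : ProvP Ax (PF.bot.imp α)
  | bangIntro {p} : ProvC Ax p → ProvP Ax (PF.bang p)
  | bangImp (p q : CF) : ProvP Ax ((PF.bang (p.imp q)).imp ((PF.bang p).imp (PF.bang q)))
  | bangQuest (α : PF) : ProvP Ax (α.imp (PF.bang (CF.quest α)))
inductive ProvC (Ax : PF → Prop) : CF → Prop
  | mp {p q} : ProvC Ax (p.imp q) → ProvC Ax p → ProvC Ax q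
  | ak (p q : CF) : ProvC Ax (p.imp (q.imp p))
  | as (p q r : CF) : ProvC Ax ((p.imp (q.imp r)).imp ((p.imp q).imp (p.imp r)))
  | andI (p q : CF) : ProvC Ax (p.imp (q.imp (p.and q)))
  | andE1 (p q : CF) : ProvC Ax ((p.and q).imp p)
  | andE2 (p q : CF) : ProvC Ax ((p.and q).imp q)
  | orI1 (p q : CF) : ProvC Ax (p.imp (p.or q))
  | orI2 (p q : CF) : ProvC Ax (q.imp (p.or q))
  | orE (p q r : CF) : ProvC Ax ((p.imp r).imp ((q.imp r).imp ((p.or q).imp r)))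
  | exf (p : CF) : ProvC Ax (CF.fls.imp p)
  | lem (p : CF) : ProvC Ax (p.or (p.imp CF.fls))
  | questIntro {α} : ProvP Ax α → ProvC Ax (CF.quest α)
  | questImp (α β : PF) : ProvC Ax ((CF.quest (α.imp β)).imp ((CF.quest α).imp (CF.quest β)))
  | questBang (p : CF) : ProvC Ax ((CF.quest (PF.bang p)).imp p)
end

/-- The axiom (!⊥): ¬!0. -/
def QHCAx : PF → Prop := fun α => α = (PF.bang CF.fls).imp PF.bot

/-- Derivability of a problem in QHC. -/
def PrvP (α : PF) : Prop := ProvP QHCAx α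
/-- Derivability of a proposition in QHC. -/
def PrvC (p : CF) : Prop := ProvC QHCAx p

/-! ### Auxiliary machinery: deduction theorem for QHC -/

/-- Extend an axiom set with one extra hypothesis. -/
def QExt (Ax : PF → Prop) (γ : PF) : PF → Prop := fun β => Ax β ∨ β = γ

theorem qhyp {Ax : PF → Prop} {γ : PF} : ProvP (QExt Ax γ) γ := .axm (Or.inr rfl)

theorem idP {Ax : PF → Prop} (α : PF) : ProvP Ax (α.imp α) :=
  ((ProvP.as α (α.imp α) α).mp (ProvP.ak α (α.imp α))).mp (ProvP.ak α α)

/-- Deduction theorem, problem side. -/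
theorem dP {Ax : PF → Prop} {γ α : PF} (d : ProvP (QExt Ax γ) α) :
    ProvP Ax (γ.imp α) := by
  induction d using ProvP.rec
    (motive_2 := fun p _ => ProvC Ax ((CF.quest γ).imp p))
  all_goals first
    | (rename_i ha; rcases ha with h | rfl
       exacts [(ProvP.ak _ _).mp (.axm h), idP _])
    | (rename_i ih1 ih2
       first
        | exact ((ProvP.as _ _ _).mp ih1).mp ih2
        | exact ((ProvC.as _ _ _).mp ih1).mp ih2)
    | (rename_i ih
       first
        | exact ((ProvP.as γ _ _).mp ((ProvP.ak _ γ).mp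
            ((ProvP.bangImp _ _).mp (ProvP.bangIntro ih)))).mp (ProvP.bangQuest γ)
        | exact (ProvC.questImp γ _).mp (ProvC.questIntro ih))
    | exact (ProvP.ak _ _).mp (.as _ _ _)
    | exact (ProvP.ak _ _).mp (.ak _ _)
    | exact (ProvP.ak _ _).mp (.andI _ _)
    | exact (ProvP.ak _ _).mp (.andE1 _ _)
    | exact (ProvP.ak _ _).mp (.andE2 _ _)
    | exact (ProvP.ak _ _).mp (.orI1 _ _)
    | exact (ProvP.ak _ _).mp (.orI2 _ _)
    | exact (ProvP.ak _ _).mp (.orE _ _ _)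
    | exact (ProvP.ak _ _).mp (.exf _)
    | exact (ProvP.ak _ _).mp (.bangImp _ _)
    | exact (ProvP.ak _ _).mp (.bangQuest _)
    | exact (ProvC.ak _ _).mp (.as _ _ _)
    | exact (ProvC.ak _ _).mp (.ak _ _)
    | exact (ProvC.ak _ _).mp (.andI _ _)
    | exact (ProvC.ak _ _).mp (.andE1 _ _)
    | exact (ProvC.ak _ _).mp (.andE2 _ _)
    | exact (ProvC.ak _ _).mp (.orI1 _ _)
    | exact (ProvC.ak _ _).mp (.orI2 _ _)
    | exact (ProvC.ak _ _).mp (.orE _ _ _)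
    | exact (ProvC.ak _ _).mp (.exf _)
    | exact (ProvC.ak _ _).mp (.lem _)
    | exact (ProvC.ak _ _).mp (.questImp _ _)
    | exact (ProvC.ak _ _).mp (.questBang _)

/-- Deduction theorem, proposition side. -/
theorem dC {Ax : PF → Prop} {γ : PF} {p : CF} (d : ProvC (QExt Ax γ) p) :
    ProvC Ax ((CF.quest γ).imp p) := by
  induction d using ProvC.rec
    (motive_1 := fun α _ => ProvP Ax (γ.imp α))
  all_goals first
    | (rename_i ha; rcases ha with h | rfl
       exacts [(ProvP.ak _ _).mp (.axm h), idP _])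
    | (rename_i ih1 ih2
       first
        | exact ((ProvP.as _ _ _).mp ih1).mp ih2
        | exact ((ProvC.as _ _ _).mp ih1).mp ih2)
    | (rename_i ih
       first
        | exact ((ProvP.as γ _ _).mp ((ProvP.ak _ γ).mp
            ((ProvP.bangImp _ _).mp (ProvP.bangIntro ih)))).mp (ProvP.bangQuest γ)
        | exact (ProvC.questImp γ _).mp (ProvC.questIntro ih))
    | exact (ProvP.ak _ _).mp (.as _ _ _)
    | exact (ProvP.ak _ _).mp (.ak _ _)
    | exact (ProvP.ak _ _).mp (.andI _ _)
    | exact (ProvP.ak _ _).mp (.andE1 _ _)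
    | exact (ProvP.ak _ _).mp (.andE2 _ _)
    | exact (ProvP.ak _ _).mp (.orI1 _ _)
    | exact (ProvP.ak _ _).mp (.orI2 _ _)
    | exact (ProvP.ak _ _).mp (.orE _ _ _)
    | exact (ProvP.ak _ _).mp (.exf _)
    | exact (ProvP.ak _ _).mp (.bangImp _ _)
    | exact (ProvP.ak _ _).mp (.bangQuest _)
    | exact (ProvC.ak _ _).mp (.as _ _ _)
    | exact (ProvC.ak _ _).mp (.ak _ _)
    | exact (ProvC.ak _ _).mp (.andI _ _)
    | exact (ProvC.ak _ _).mp (.andE1 _ _)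
    | exact (ProvC.ak _ _).mp (.andE2 _ _)
    | exact (ProvC.ak _ _).mp (.orI1 _ _)
    | exact (ProvC.ak _ _).mp (.orI2 _ _)
    | exact (ProvC.ak _ _).mp (.orE _ _ _)
    | exact (ProvC.ak _ _).mp (.exf _)
    | exact (ProvC.ak _ _).mp (.lem _)
    | exact (ProvC.ak _ _).mp (.questImp _ _)
    | exact (ProvC.ak _ _).mp (.questBang _)

/-! ### Key derivable facts -/

/-- From a refuted problem, everything classical: `⊢ ?⊥ → 0` implicitly via `⊥ → !0`. -/
theorem flsOfBot {Ax : PF → Prop} (h : ProvP Ax PF.bot) : ProvC Ax CF.fls :=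
  (ProvC.questBang CF.fls).mp (ProvC.questIntro ((ProvP.exf (PF.bang CF.fls)).mp h))

/-- `⊢ ¬α → !¬?α`. -/
theorem negBang {Ax : PF → Prop} (α : PF) :
    ProvP Ax ((PF.neg α).imp (PF.bang (CF.neg (CF.quest α)))) :=
  dP <| ProvP.bangIntro <| dC <| by
    have hα : ProvP (QExt (QExt Ax (PF.neg α)) α) α := qhyp
    have hn : ProvP (QExt (QExt Ax (PF.neg α)) α) (PF.neg α) := .axm (Or.inl (Or.inr rfl))
    exact flsOfBot (hn.mp hα)

/-- `⊢ !¬?α → ¬α`, using the axiom ¬!0. -/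
theorem bangNegNeg {Ax : PF → Prop} (α : PF)
    (hb : Ax ((PF.bang CF.fls).imp PF.bot)) :
    ProvP Ax ((PF.bang (CF.neg (CF.quest α))).imp (PF.neg α)) :=
  dP <| dP <| by
    have hα : ProvP (QExt (QExt Ax (PF.bang (CF.neg (CF.quest α)))) α) α := qhyp
    have hB : ProvP (QExt (QExt Ax (PF.bang (CF.neg (CF.quest α)))) α)
        (PF.bang (CF.neg (CF.quest α))) := .axm (Or.inl (Or.inr rfl))
    have hb2 : ProvP (QExt (QExt Ax (PF.bang (CF.neg (CF.quest α)))) α)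
        ((PF.bang CF.fls).imp PF.bot) := .axm (Or.inl (Or.inl hb))
    exact hb2.mp (((ProvP.bangImp (CF.quest α) CF.fls).mp hB).mp
      ((ProvP.bangQuest α).mp hα))

/-- `⊢ ∇α → ¬¬α`, using the axiom ¬!0. -/
theorem nablaNegNeg {Ax : PF → Prop} (α : PF)
    (hb : Ax ((PF.bang CF.fls).imp PF.bot)) :
    ProvP Ax ((PF.nabla α).imp (PF.neg (PF.neg α))) :=
  dP <| dP <| by
    have hN : ProvP (QExt (QExt Ax (PF.nabla α)) (PF.neg α)) (PF.nabla α) :=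
      .axm (Or.inl (Or.inr rfl))
    have hn : ProvP (QExt (QExt Ax (PF.nabla α)) (PF.neg α)) (PF.neg α) := qhyp
    have hb2 : ProvP (QExt (QExt Ax (PF.nabla α)) (PF.neg α))
        ((PF.bang CF.fls).imp PF.bot) := .axm (Or.inl (Or.inl hb))
    exact hb2.mp (((ProvP.bangImp (CF.quest α) CF.fls).mp ((negBang α).mp hn)).mp hN)

/-- `⊢ ¬!¬?α → ¬¬α`. -/
theorem negBangNegNeg {Ax : PF → Prop} (α : PF) :
    ProvP Ax ((PF.neg (PF.bang (CF.neg (CF.quest α)))).imp (PF.neg (PF.neg α))) :=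
  dP <| dP <| by
    have h1 : ProvP (QExt (QExt Ax (PF.neg (PF.bang (CF.neg (CF.quest α))))) (PF.neg α))
        (PF.neg (PF.bang (CF.neg (CF.quest α)))) := .axm (Or.inl (Or.inr rfl))
    have hn : ProvP (QExt (QExt Ax (PF.neg (PF.bang (CF.neg (CF.quest α))))) (PF.neg α))
        (PF.neg α) := qhyp
    exact h1.mp ((negBang α).mp hn)

theorem qhc_nabla_eq_negneg_iff_stable (α : PF) :
    PrvP (PF.iff (PF.iff (PF.neg (PF.neg α)) (PF.nabla α))
      ((PF.neg (PF.bang (CF.neg (CF.quest α)))).imp (PF.bang (CF.quest α)))) := by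
  have hb : QHCAx ((PF.bang CF.fls).imp PF.bot) := rfl
  set Bn := PF.bang (CF.neg (CF.quest α)) with hBn
  set LHS := PF.iff (PF.neg (PF.neg α)) (PF.nabla α) with hLHS
  set RHS := (PF.neg Bn).imp (PF.bang (CF.quest α)) with hRHS
  have F : ProvP QHCAx (LHS.imp RHS) := by
    refine dP (dP ?_)
    have hX : ProvP (QExt (QExt QHCAx LHS) (PF.neg Bn)) LHS := .axm (Or.inl (Or.inr rfl))
    have h1 : ProvP (QExt (QExt QHCAx LHS) (PF.neg Bn)) (PF.neg Bn) := qhyp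
    have hfwd : ProvP (QExt (QExt QHCAx LHS) (PF.neg Bn))
        ((PF.neg (PF.neg α)).imp (PF.nabla α)) := (ProvP.andE1 _ _).mp hX
    exact hfwd.mp ((negBangNegNeg α).mp h1)
  have G : ProvP QHCAx (RHS.imp LHS) := by
    refine dP ?_
    have hb1 : QExt QHCAx RHS ((PF.bang CF.fls).imp PF.bot) := Or.inl hb
    have part2 : ProvP (QExt QHCAx RHS) ((PF.nabla α).imp (PF.neg (PF.neg α))) :=
      nablaNegNeg α hb1
    have part1 : ProvP (QExt QHCAx RHS) ((PF.neg (PF.neg α)).imp (PF.nabla α)) := by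
      refine dP ?_
      have hnn : ProvP (QExt (QExt QHCAx RHS) (PF.neg (PF.neg α))) (PF.neg (PF.neg α)) := qhyp
      have hR : ProvP (QExt (QExt QHCAx RHS) (PF.neg (PF.neg α))) RHS :=
        .axm (Or.inl (Or.inr rfl))
      have nB : ProvP (QExt (QExt QHCAx RHS) (PF.neg (PF.neg α))) (PF.neg Bn) := by
        refine dP ?_
        have hB : ProvP (QExt (QExt (QExt QHCAx RHS) (PF.neg (PF.neg α))) Bn) Bn := qhyp
        have hnn' : ProvP (QExt (QExt (QExt QHCAx RHS) (PF.neg (PF.neg α))) Bn)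
            (PF.neg (PF.neg α)) := .axm (Or.inl (Or.inr rfl))
        have hb3 : QExt (QExt (QExt QHCAx RHS) (PF.neg (PF.neg α))) Bn
            ((PF.bang CF.fls).imp PF.bot) := Or.inl (Or.inl (Or.inl hb))
        exact hnn'.mp ((bangNegNeg α hb3).mp hB)
      exact hR.mp nB
    exact ((ProvP.andI _ _).mp part1).mp part2
  exact ((ProvP.andI _ _).mp F).mp G
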